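/- Let Ω ⊆ ℝ^d be a nonempty closed convex set, φ : ℝ^d → ℝ be μ-weakly convex (μ > 0) with φ(x) − inf_{z∈Ω} φ(z) ≤ Δ_φ for all x ∈ Ω. Set γ = 1/(2μ) and w_s = s^α with α > 0. Let x₀ ∈ Ω be deterministic and x₁, …, x_{S+1} be Ω-valued random vectors; for each s ≥ 1 let f_s(x) = φ(x) + (1/(2γ))‖x − x_{s−1}‖² and z_s = prox_{γ(φ+δ_Ω)}(x_{s−1}) (the unique minimizer of f_s over Ω). Assume there are constants 0 ≤ ε1_s ≤ 1/(48γ), 0 ≤ ε2_s ≤ 1/2, and 0 ≤ ε3_s ≤ c₃/s (for some c₃ ≥ 0) such that, for every s, almost surely E[f_s(x_s) − f_s(z_s) | all randomness before stage s] ≤ ε1_s‖x_{s−1} − z_s‖² + ε2_s (f_s(x_{s−1}) − f_s(z_s)) + ε3_s. Then (∑_{s=1}^{S+1} w_s E[‖∇φ_γ(x_{s−1})‖²]) / (∑_{s=1}^{S+1} w_s) ≤ 32Δ_φ(α+1)/(γ(S+1)) + 48 c₃ (α+1)/(γ(S+1) α^{𝟙(α<1)}). -/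

import Mathlib

open MeasureTheory RealInnerProductSpace

set_option maxHeartbeats 2000000


open MeasureTheory RealInnerProductSpace

private lemma lin_convex {E : Type*} [NormedAddCommGroup E] [InnerProductSpace ℝ E]
    (v : E) (k : ℝ) : ConvexOn ℝ Set.univ fun x : E => ⟪x, v⟫ + k := by
  refine ⟨convex_univ, fun a _ b _ p q hp hq hpq => le_of_eq ?_⟩
  simp only [smul_eq_mul, inner_add_left, real_inner_smul_left]
  linear_combination (-k) * hpq

private lemma convex_aux {E : Type*} [NormedAddCommGroup E] [InnerProductSpace ℝ E]
    {φ : E → ℝ} {μ : ℝ}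
    (hweak : ConvexOn ℝ Set.univ fun x => φ x + μ / 2 * ‖x‖ ^ 2)
    (c z : E) :
    ConvexOn ℝ Set.univ fun x => φ x + μ * ‖x - c‖ ^ 2 - μ / 2 * ‖x - z‖ ^ 2 := by
  have h : ∀ x : E, φ x + μ * ‖x - c‖ ^ 2 - μ / 2 * ‖x - z‖ ^ 2
      = (φ x + μ / 2 * ‖x‖ ^ 2) + (⟪x, μ • z - (2*μ) • c⟫ + (μ * ‖c‖^2 - μ/2 * ‖z‖^2)) := by
    intro x
    have h1 : ‖x - c‖ ^ 2 = ‖x‖^2 - 2 * ⟪x, c⟫ + ‖c‖^2 := norm_sub_sq_real x c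
    have h2 : ‖x - z‖ ^ 2 = ‖x‖^2 - 2 * ⟪x, z⟫ + ‖z‖^2 := norm_sub_sq_real x z
    rw [h1, h2, inner_sub_right, real_inner_smul_right, real_inner_smul_right]
    ring
  simp only [h]
  exact hweak.add (lin_convex _ _)

private lemma quad_growth {E : Type*} [NormedAddCommGroup E] [InnerProductSpace ℝ E]
    {Ω : Set E} (hconv : Convex ℝ Ω) {φ : E → ℝ} {μ : ℝ} (hμ : 0 < μ)
    (hweak : ConvexOn ℝ Set.univ fun x => φ x + μ / 2 * ‖x‖ ^ 2)
    {c z : E} (hzΩ : z ∈ Ω)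
    (hmin : ∀ y ∈ Ω, φ z + μ * ‖z - c‖ ^ 2 ≤ φ y + μ * ‖y - c‖ ^ 2)
    {y : E} (hy : y ∈ Ω) :
    φ z + μ * ‖z - c‖ ^ 2 + 3 * μ / 8 * ‖y - z‖ ^ 2 ≤ φ y + μ * ‖y - c‖ ^ 2 := by
  have hgconv := convex_aux hweak c z
  have hw : (3/4 : ℝ) • z + (1/4 : ℝ) • y ∈ Ω :=
    hconv hzΩ hy (by norm_num) (by norm_num) (by norm_num)
  have hcvx := hgconv.2 (Set.mem_univ z) (Set.mem_univ y)
    (by norm_num : (0:ℝ) ≤ 3/4) (by norm_num : (0:ℝ) ≤ 1/4) (by norm_num)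
  have hm := hmin _ hw
  set w := (3/4 : ℝ) • z + (1/4 : ℝ) • y with hwdef
  have hwz : ‖w - z‖ ^ 2 = (1/16) * ‖y - z‖ ^ 2 := by
    have hd : w - z = (1/4 : ℝ) • (y - z) := by
      rw [hwdef]; module
    rw [hd, norm_smul, mul_pow, Real.norm_eq_abs]
    norm_num
  have hzz : ‖z - z‖ ^ 2 = 0 := by simp
  simp only [smul_eq_mul] at hcvx
  nlinarith [hcvx, hm, hwz, hzz, sq_nonneg ‖y - z‖]

private lemma sum_rpow_ge (α : ℝ) (hα : 0 < α) : ∀ N : ℕ, 1 ≤ N →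
    ((N:ℝ)) ^ (α+1) / (α+1) ≤ ∑ s ∈ Finset.Icc 1 N, (s:ℝ) ^ α := by
  intro N hN
  induction N, hN using Nat.le_induction with
  | base =>
    simp only [Finset.Icc_self, Finset.sum_singleton, Nat.cast_one, Real.one_rpow]
    rw [div_le_one (by linarith)]
    linarith
  | succ n hn ih =>
    rw [Finset.sum_Icc_succ_top (by omega : 1 ≤ n + 1)]
    have hM0 : (0:ℝ) < (n:ℝ) + 1 := by positivity
    have key : ((n:ℝ)+1) ^ (α+1) ≤ (n:ℝ)^(α+1) + (α+1) * ((n:ℝ)+1)^α := by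
      have hb := one_add_mul_self_le_rpow_one_add
        (show (-1:ℝ) ≤ -(1/((n:ℝ)+1)) by
          rw [neg_le_neg_iff, div_le_one hM0]; linarith) (show (1:ℝ) ≤ α + 1 by linarith)
      have h1 : (1:ℝ) + -(1/((n:ℝ)+1)) = (n:ℝ)/((n:ℝ)+1) := by field_simp; ring
      rw [h1] at hb
      have h2 : ((n:ℝ)/((n:ℝ)+1)) ^ (α+1) = (n:ℝ)^(α+1) / ((n:ℝ)+1)^(α+1) :=
        Real.div_rpow (by positivity) hM0.le _
      rw [h2] at hb
      have h3 : ((n:ℝ)+1)^(α+1) = ((n:ℝ)+1)^α * ((n:ℝ)+1) := by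
        rw [Real.rpow_add hM0, Real.rpow_one]
      have h4 := mul_le_mul_of_nonneg_right hb (Real.rpow_nonneg hM0.le (α+1))
      rw [div_mul_cancel₀ _ (by positivity : ((n:ℝ)+1)^(α+1) ≠ 0)] at h4
      have h6 : (1 + (α+1) * -(1/((n:ℝ)+1))) * ((n:ℝ)+1)^(α+1)
          = ((n:ℝ)+1)^(α+1) - (α+1)*((n:ℝ)+1)^α := by
        rw [h3]; field_simp; ring
      rw [h6] at h4
      linarith
    have hcast : ((n+1 : ℕ):ℝ) = (n:ℝ) + 1 := by push_cast; ring
    rw [hcast]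
    have k2 : ((n:ℝ)+1)^(α+1)/(α+1) ≤ ((n:ℝ)^(α+1) + (α+1)*((n:ℝ)+1)^α)/(α+1) :=
      (div_le_div_iff_of_pos_right (by linarith)).mpr key
    have k3 : ((n:ℝ)^(α+1) + (α+1)*((n:ℝ)+1)^α)/(α+1)
        = (n:ℝ)^(α+1)/(α+1) + ((n:ℝ)+1)^α := by field_simp
    linarith [k2, k3.le, ih]

private lemma sum_rpow_le (α : ℝ) (hα : 0 < α) (hα1 : α < 1) : ∀ N : ℕ, 1 ≤ N →
    ∑ s ∈ Finset.Icc 1 N, (s:ℝ) ^ (α-1) ≤ 1 + ((N:ℝ)^α - 1)/α := by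
  intro N hN
  induction N, hN using Nat.le_induction with
  | base =>
    simp only [Finset.Icc_self, Finset.sum_singleton, Nat.cast_one, Real.one_rpow]
    simp
  | succ n hn ih =>
    rw [Finset.sum_Icc_succ_top (by omega : 1 ≤ n + 1)]
    have hM0 : (0:ℝ) < (n:ℝ) + 1 := by positivity
    have key : (n:ℝ)^α ≤ ((n:ℝ)+1)^α - α * ((n:ℝ)+1)^(α-1) := by
      have hb := rpow_one_add_le_one_add_mul_self
        (show (-1:ℝ) ≤ -(1/((n:ℝ)+1)) by
          rw [neg_le_neg_iff, div_le_one hM0]; linarith) hα.le hα1.le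
      have h1 : (1:ℝ) + -(1/((n:ℝ)+1)) = (n:ℝ)/((n:ℝ)+1) := by field_simp; ring
      rw [h1] at hb
      have h2 : ((n:ℝ)/((n:ℝ)+1)) ^ α = (n:ℝ)^α / ((n:ℝ)+1)^α :=
        Real.div_rpow (by positivity) hM0.le _
      rw [h2] at hb
      have h4 := mul_le_mul_of_nonneg_right hb (Real.rpow_nonneg hM0.le α)
      rw [div_mul_cancel₀ _ (by positivity : ((n:ℝ)+1)^α ≠ 0)] at h4
      have h3 : ((n:ℝ)+1)^(α-1) * ((n:ℝ)+1) = ((n:ℝ)+1)^α := by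
        rw [← Real.rpow_add_one hM0.ne' (α-1)]; ring_nf
      have h5 : (1 + α * -(1/((n:ℝ)+1))) * ((n:ℝ)+1)^α
          = ((n:ℝ)+1)^α - α * ((n:ℝ)+1)^(α-1) := by
        rw [← h3]; field_simp; ring
      rw [h5] at h4
      exact h4
    have hcast : ((n+1 : ℕ):ℝ) = (n:ℝ) + 1 := by push_cast; ring
    rw [hcast]
    have k2 : ((n:ℝ)+1)^(α-1) ≤ (((n:ℝ)+1)^α - (n:ℝ)^α)/α := by
      rw [le_div_iff₀ hα]; linarith
    have k3 : (((n:ℝ)+1)^α - (n:ℝ)^α)/α = (((n:ℝ)+1)^α - 1)/α - ((n:ℝ)^α - 1)/α := by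
      field_simp; ring
    linarith [ih, k2, k3.le, k3.ge]


/-- Meta theorem for the stagewise framework: if at each stage `s` the stochastic
algorithm returns `x_s ∈ Ω` with
`E[f_s(x_s) - f_s(z_s) | past] ≤ ε₁ₛ‖x_{s-1} - z_s‖² + ε₂ₛ(f_s(x_{s-1}) - f_s(z_s)) + ε₃ₛ`
(a.s.), where `f_s(x) = φ(x) + (1/(2γ))‖x - x_{s-1}‖²`, `z_s = prox_{γ(φ+δ_Ω)}(x_{s-1})`,
`γ = 1/(2μ)`, `ε₁ₛ ≤ 1/(48γ)`, `ε₂ₛ ≤ 1/2` and `ε₃ₛ ≤ c₃/s`, then with weights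
`w_s = s^α` (`α > 0`):
`(∑_{s=1}^{S+1} w_s E‖∇φ_γ(x_{s-1})‖²)/(∑_{s=1}^{S+1} w_s)
   ≤ 32Δ_φ(α+1)/(γ(S+1)) + 48c₃(α+1)/(γ(S+1)α^{𝟙(α<1)})`. -/
theorem stmt_0 {d : ℕ} {Θ : Type*} [mΘ : MeasurableSpace Θ]
    (P : Measure Θ) [IsProbabilityMeasure P]
    (Ω : Set (EuclideanSpace ℝ (Fin d))) (hne : Ω.Nonempty) (hcl : IsClosed Ω)
    (hconv : Convex ℝ Ω)
    (φ : EuclideanSpace ℝ (Fin d) → ℝ) (μ γ Δφ α c₃ : ℝ)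
    (hμ : 0 < μ) (hγ : γ = 1 / (2 * μ)) (hα : 0 < α) (hc₃ : 0 ≤ c₃)
    (hweak : ConvexOn ℝ Set.univ fun x => φ x + μ / 2 * ‖x‖ ^ 2)
    (hΔ : ∀ x ∈ Ω, ∀ z ∈ Ω, φ x - φ z ≤ Δφ)
    (S : ℕ)
    (𝒢 : ℕ → MeasurableSpace Θ) (hle : ∀ s, 𝒢 s ≤ mΘ) (hmono : Monotone 𝒢)
    (x z : ℕ → Θ → EuclideanSpace ℝ (Fin d))
    (hx0 : ∃ c ∈ Ω, x 0 = fun _ => c)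
    (hxΩ : ∀ s ω, x s ω ∈ Ω)
    (hadapt : ∀ s, StronglyMeasurable[𝒢 s] (x s))
    (hzadapt : ∀ s ∈ Finset.Icc 1 (S + 1), StronglyMeasurable[𝒢 (s - 1)] (z s))
    -- z_s is the minimizer over Ω of f_s(x) = φ(x) + (1/(2γ))‖x - x_{s-1}‖²
    (hz : ∀ s ∈ Finset.Icc 1 (S + 1), ∀ ω, z s ω ∈ Ω ∧ ∀ y ∈ Ω,
      φ (z s ω) + 1 / (2 * γ) * ‖z s ω - x (s - 1) ω‖ ^ 2
        ≤ φ y + 1 / (2 * γ) * ‖y - x (s - 1) ω‖ ^ 2)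
    (ε₁ ε₂ ε₃ : ℕ → ℝ)
    (hε₁ : ∀ s ∈ Finset.Icc 1 (S + 1), 0 ≤ ε₁ s ∧ ε₁ s ≤ 1 / (48 * γ))
    (hε₂ : ∀ s ∈ Finset.Icc 1 (S + 1), 0 ≤ ε₂ s ∧ ε₂ s ≤ 1 / 2)
    (hε₃ : ∀ s ∈ Finset.Icc 1 (S + 1), 0 ≤ ε₃ s ∧ ε₃ s ≤ c₃ / (s : ℝ))
    (hintφ : ∀ s, Integrable (fun ω => φ (x s ω)) P)
    (hintgap : ∀ s ∈ Finset.Icc 1 (S + 1), Integrable (fun ω =>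
      (φ (x s ω) + 1 / (2 * γ) * ‖x s ω - x (s - 1) ω‖ ^ 2)
        - (φ (z s ω) + 1 / (2 * γ) * ‖z s ω - x (s - 1) ω‖ ^ 2)) P)
    (hintsq : ∀ s ∈ Finset.Icc 1 (S + 1),
      Integrable (fun ω => ‖x (s - 1) ω - z s ω‖ ^ 2) P)
    -- almost sure conditional one-stage bound
    (hE : ∀ s ∈ Finset.Icc 1 (S + 1), ∀ᵐ ω ∂P,
      (P[fun ω' => (φ (x s ω') + 1 / (2 * γ) * ‖x s ω' - x (s - 1) ω'‖ ^ 2)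
            - (φ (z s ω') + 1 / (2 * γ) * ‖z s ω' - x (s - 1) ω'‖ ^ 2) | 𝒢 (s - 1)]) ω
        ≤ ε₁ s * ‖x (s - 1) ω - z s ω‖ ^ 2
          + ε₂ s * ((φ (x (s - 1) ω) + 1 / (2 * γ) * ‖x (s - 1) ω - x (s - 1) ω‖ ^ 2)
              - (φ (z s ω) + 1 / (2 * γ) * ‖z s ω - x (s - 1) ω‖ ^ 2))
          + ε₃ s) :
    (∑ s ∈ Finset.Icc 1 (S + 1),
        (s : ℝ) ^ α * ∫ ω, ‖γ⁻¹ • (x (s - 1) ω - z s ω)‖ ^ 2 ∂P)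
        / (∑ s ∈ Finset.Icc 1 (S + 1), (s : ℝ) ^ α)
      ≤ 32 * Δφ * (α + 1) / (γ * ((S : ℝ) + 1))
        + 48 * c₃ * (α + 1) / (γ * ((S : ℝ) + 1) * (if α < 1 then α else 1)) := by
  classical
  obtain ⟨c, hcΩ, hx0c⟩ := hx0
  have hγ0 : 0 < γ := by rw [hγ]; positivity
  have hγμ : 1 / (2 * γ) = μ := by rw [hγ]; field_simp
  have h48 : 1 / (48 * γ) = μ / 24 := by rw [hγ]; field_simp; ring
  have hΔ0 : 0 ≤ Δφ := by have := hΔ c hcΩ c hcΩ; linarith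
  set L : ℝ := φ c - Δφ with hLdef
  have hφlb : ∀ y ∈ Ω, L ≤ φ y := by
    intro y hy; have := hΔ c hcΩ y hy; rw [hLdef]; linarith
  have hφub : ∀ y ∈ Ω, φ y ≤ L + 2 * Δφ := by
    intro y hy; have := hΔ y hy c hcΩ; rw [hLdef]; linarith
  simp only [hγμ] at hz hintgap hE
  simp only [h48] at hε₁
  simp only [sub_self, norm_zero, zero_pow, mul_zero, add_zero, ne_eq,
    OfNat.ofNat_ne_zero, not_false_eq_true] at hE
  -- continuity of φ
  have hφcont : Continuous φ := by
    have h2 : Continuous (fun v : EuclideanSpace ℝ (Fin d) => φ v + μ/2 * ‖v‖^2) :=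
      continuousOn_univ.mp (hweak.continuousOn isOpen_univ)
    have h3 : Continuous (fun v : EuclideanSpace ℝ (Fin d) =>
        (φ v + μ/2 * ‖v‖^2) - μ/2 * ‖v‖^2) := h2.sub (by fun_prop)
    simpa using h3
  have hxm : ∀ s, AEStronglyMeasurable (x s) P :=
    fun s => ((hadapt s).mono (hle s)).aestronglyMeasurable
  have hzm : ∀ s ∈ Finset.Icc 1 (S+1), AEStronglyMeasurable (z s) P :=
    fun s hs => ((hzadapt s hs).mono (hle _)).aestronglyMeasurable
  -- the four key sequences
  set ED : ℕ → ℝ := fun s => ∫ ω, ‖x (s-1) ω - z s ω‖^2 ∂P with hEDdef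
  set EA : ℕ → ℝ := fun s => ∫ ω, (φ (z s ω) + μ * ‖z s ω - x (s-1) ω‖^2) ∂P with hEAdef
  set EP : ℕ → ℝ := fun s => ∫ ω, φ (x (s-1) ω) ∂P with hEPdef
  set EG : ℕ → ℝ := fun s => ∫ ω, ((φ (x s ω) + μ * ‖x s ω - x (s-1) ω‖^2)
      - (φ (z s ω) + μ * ‖z s ω - x (s-1) ω‖^2)) ∂P with hEGdef
  -- pointwise bounds on the prox value
  have hAle : ∀ s ∈ Finset.Icc 1 (S+1), ∀ ω,
      φ (z s ω) + μ * ‖z s ω - x (s-1) ω‖^2 ≤ φ (x (s-1) ω) := by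
    intro s hs ω
    have h := (hz s hs ω).2 (x (s-1) ω) (hxΩ _ ω)
    simpa using h
  have hAlb : ∀ s ∈ Finset.Icc 1 (S+1), ∀ ω,
      L ≤ φ (z s ω) + μ * ‖z s ω - x (s-1) ω‖^2 := by
    intro s hs ω
    have h1 := hφlb (z s ω) (hz s hs ω).1
    nlinarith [sq_nonneg ‖z s ω - x (s-1) ω‖]
  -- integrability of the prox-value function
  have hintA : ∀ s ∈ Finset.Icc 1 (S+1),
      Integrable (fun ω => φ (z s ω) + μ * ‖z s ω - x (s-1) ω‖^2) P := by
    intro s hs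
    have hmeas : AEStronglyMeasurable
        (fun ω => φ (z s ω) + μ * ‖z s ω - x (s-1) ω‖^2) P := by
      apply AEStronglyMeasurable.add
      · exact hφcont.comp_aestronglyMeasurable (hzm s hs)
      · exact aestronglyMeasurable_const.mul
          ((continuous_norm.pow 2).comp_aestronglyMeasurable ((hzm s hs).sub (hxm (s-1))))
    refine (integrable_const (|L| + 2*Δφ)).mono' hmeas (Filter.Eventually.of_forall fun ω => ?_)
    have h1 := hAlb s hs ω
    have h2 := (hAle s hs ω).trans (hφub _ (hxΩ _ ω))
    rw [Real.norm_eq_abs, abs_le]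
    constructor
    · linarith [neg_abs_le L]
    · linarith [le_abs_self L]
  -- quadratic growth
  have hQG : ∀ s ∈ Finset.Icc 1 (S+1), ∀ ω, ∀ y ∈ Ω,
      φ (z s ω) + μ * ‖z s ω - x (s-1) ω‖^2 + 3*μ/8 * ‖y - z s ω‖^2
        ≤ φ y + μ * ‖y - x (s-1) ω‖^2 :=
    fun s hs ω y hy => quad_growth hconv hμ hweak (hz s hs ω).1 (hz s hs ω).2 hy
  have hconst : ∀ (r : ℝ), ∫ (_ : Θ), r ∂P = r := by
    intro r; simp
  have hED0 : ∀ s, 0 ≤ ED s := by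
    intro s; simp only [hEDdef]; exact integral_nonneg fun ω => sq_nonneg _
  have hEAub : ∀ s ∈ Finset.Icc 1 (S+1), EA s ≤ L + 2*Δφ := by
    intro s hs
    simp only [hEAdef]
    calc ∫ ω, (φ (z s ω) + μ * ‖z s ω - x (s-1) ω‖^2) ∂P
        ≤ ∫ ω, φ (x (s-1) ω) ∂P :=
          integral_mono (hintA s hs) (hintφ (s-1)) (fun ω => hAle s hs ω)
      _ ≤ ∫ (_ : Θ), (L + 2*Δφ) ∂P :=
          integral_mono (hintφ (s-1)) (integrable_const _) (fun ω => hφub _ (hxΩ _ ω))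
      _ = L + 2*Δφ := hconst _
  have hEAlb : ∀ s ∈ Finset.Icc 1 (S+1), L + μ * ED s ≤ EA s := by
    intro s hs
    simp only [hEAdef, hEDdef]
    have hmain : ∫ ω, (L + μ * ‖x (s-1) ω - z s ω‖^2) ∂P
        ≤ ∫ ω, (φ (z s ω) + μ * ‖z s ω - x (s-1) ω‖^2) ∂P := by
      refine integral_mono ((integrable_const L).add ((hintsq s hs).const_mul μ))
        (hintA s hs) (fun ω => ?_)
      have h1 := hφlb (z s ω) (hz s hs ω).1
      have h6 : ‖z s ω - x (s-1) ω‖^2 = ‖x (s-1) ω - z s ω‖^2 := by rw [norm_sub_rev]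
      simp only [h6]
      linarith
    rwa [integral_add (integrable_const L) ((hintsq s hs).const_mul μ),
      integral_const_mul, hconst] at hmain
  have hEPlb : ∀ s, L ≤ EP s := by
    intro s
    simp only [hEPdef]
    calc L = ∫ (_ : Θ), L ∂P := (hconst _).symm
      _ ≤ ∫ ω, φ (x (s-1) ω) ∂P :=
        integral_mono (integrable_const _) (hintφ (s-1)) (fun ω => hφlb _ (hxΩ _ ω))
  have hEPub : ∀ s, EP s ≤ L + 2*Δφ := by
    intro s
    simp only [hEPdef]
    calc ∫ ω, φ (x (s-1) ω) ∂P ≤ ∫ (_ : Θ), (L + 2*Δφ) ∂P :=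
        integral_mono (hintφ (s-1)) (integrable_const _) (fun ω => hφub _ (hxΩ _ ω))
      _ = L + 2*Δφ := hconst _
  have hEG0 : ∀ s ∈ Finset.Icc 1 (S+1), 0 ≤ EG s := by
    intro s hs
    simp only [hEGdef]
    refine integral_nonneg fun ω => ?_
    have := (hz s hs ω).2 (x s ω) (hxΩ s ω)
    simp only [Pi.zero_apply]
    linarith
  have hEPA : ∀ s ∈ Finset.Icc 1 (S+1), EA s ≤ EP s := by
    intro s hs
    simp only [hEAdef, hEPdef]
    exact integral_mono (hintA s hs) (hintφ (s-1)) (fun ω => hAle s hs ω)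
  have hF3 : ∀ s ∈ Finset.Icc 1 (S+1), EG s ≤ ε₁ s * ED s + ε₂ s * (EP s - EA s) + ε₃ s := by
    intro s hs
    have c3 : Integrable (fun ω => ε₁ s * ‖x (s-1) ω - z s ω‖^2) P :=
      (hintsq s hs).const_mul _
    have c4 : Integrable (fun ω =>
        ε₂ s * (φ (x (s-1) ω) - (φ (z s ω) + μ * ‖z s ω - x (s-1) ω‖^2))) P :=
      ((hintφ (s-1)).sub (hintA s hs)).const_mul _
    have c5 : Integrable (fun ω => ε₁ s * ‖x (s-1) ω - z s ω‖^2
        + ε₂ s * (φ (x (s-1) ω) - (φ (z s ω) + μ * ‖z s ω - x (s-1) ω‖^2))) P := c3.add c4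
    have hRint : Integrable (fun ω => ε₁ s * ‖x (s-1) ω - z s ω‖^2
        + ε₂ s * (φ (x (s-1) ω) - (φ (z s ω) + μ * ‖z s ω - x (s-1) ω‖^2)) + ε₃ s) P :=
      c5.add (integrable_const _)
    have hLe := integral_mono_ae integrable_condExp hRint (hE s hs)
    rw [integral_condExp (hle (s-1))] at hLe
    rw [integral_add c5 (integrable_const _), integral_add c3 c4,
        integral_const_mul, integral_const_mul,
        integral_sub (hintφ (s-1)) (hintA s hs), hconst] at hLe
    simp only [hEGdef, hEDdef, hEPdef, hEAdef]
    exact hLe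
  have hrecA : ∀ s, 1 ≤ s → s ≤ S → EA (s+1) ≤ EA s - μ * ED s + 8/3 * EG s := by
    intro s h1 h2
    have hs : s ∈ Finset.Icc 1 (S+1) := Finset.mem_Icc.mpr ⟨h1, by omega⟩
    have hs' : s+1 ∈ Finset.Icc 1 (S+1) := Finset.mem_Icc.mpr ⟨by omega, by omega⟩
    have hEA1 : EA (s+1) = ∫ ω, (φ (z (s+1) ω) + μ * ‖z (s+1) ω - x s ω‖^2) ∂P := by
      simp only [hEAdef, Nat.add_sub_cancel]
    have hpt : ∀ ω, φ (z (s+1) ω) + μ * ‖z (s+1) ω - x s ω‖^2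
        ≤ (φ (z s ω) + μ * ‖z s ω - x (s-1) ω‖^2) - μ * ‖x (s-1) ω - z s ω‖^2
          + 8/3 * ((φ (x s ω) + μ * ‖x s ω - x (s-1) ω‖^2)
            - (φ (z s ω) + μ * ‖z s ω - x (s-1) ω‖^2)) := by
      intro ω
      have h3 := (hz (s+1) hs' ω).2 (z s ω) (hz s hs ω).1
      simp only [Nat.add_sub_cancel] at h3
      have h4 := hQG s hs ω (x s ω) (hxΩ s ω)
      have h5 : ‖z s ω - x s ω‖^2 = ‖x s ω - z s ω‖^2 := by rw [norm_sub_rev]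
      have h6 : ‖z s ω - x (s-1) ω‖^2 = ‖x (s-1) ω - z s ω‖^2 := by rw [norm_sub_rev]
      rw [h5] at h3
      rw [h6] at h4 ⊢
      linarith
    have hint1 : Integrable (fun ω => (φ (z s ω) + μ * ‖z s ω - x (s-1) ω‖^2)
        - μ * ‖x (s-1) ω - z s ω‖^2) P := (hintA s hs).sub ((hintsq s hs).const_mul μ)
    have hint2 : Integrable (fun ω => 8/3 * ((φ (x s ω) + μ * ‖x s ω - x (s-1) ω‖^2)
        - (φ (z s ω) + μ * ‖z s ω - x (s-1) ω‖^2))) P := (hintgap s hs).const_mul _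
    have hint0 : Integrable (fun ω => φ (z (s+1) ω) + μ * ‖z (s+1) ω - x s ω‖^2) P :=
      hintA (s+1) hs'
    have hint12 : Integrable (fun ω => (φ (z s ω) + μ * ‖z s ω - x (s-1) ω‖^2)
        - μ * ‖x (s-1) ω - z s ω‖^2
        + 8/3 * ((φ (x s ω) + μ * ‖x s ω - x (s-1) ω‖^2)
          - (φ (z s ω) + μ * ‖z s ω - x (s-1) ω‖^2))) P := hint1.add hint2
    have hmain := integral_mono hint0 hint12 hpt
    rw [integral_add hint1 hint2,
        integral_sub (hintA s hs) ((hintsq s hs).const_mul μ),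
        integral_const_mul, integral_const_mul] at hmain
    rw [hEA1]
    simp only [hEAdef, hEDdef, hEGdef]
    exact hmain
  have hrecP : ∀ s, 1 ≤ s → s ≤ S → EP (s+1) ≤ EA s + EG s := by
    intro s h1 h2
    have hs : s ∈ Finset.Icc 1 (S+1) := Finset.mem_Icc.mpr ⟨h1, by omega⟩
    have hEP1 : EP (s+1) = ∫ ω, φ (x s ω) ∂P := by
      simp only [hEPdef, Nat.add_sub_cancel]
    have hpt : ∀ ω, φ (x s ω) ≤ (φ (z s ω) + μ * ‖z s ω - x (s-1) ω‖^2)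
        + ((φ (x s ω) + μ * ‖x s ω - x (s-1) ω‖^2)
          - (φ (z s ω) + μ * ‖z s ω - x (s-1) ω‖^2)) := by
      intro ω
      nlinarith [sq_nonneg ‖x s ω - x (s-1) ω‖, hμ.le,
        mul_nonneg hμ.le (sq_nonneg ‖x s ω - x (s-1) ω‖)]
    have hint12 : Integrable (fun ω => (φ (z s ω) + μ * ‖z s ω - x (s-1) ω‖^2)
        + ((φ (x s ω) + μ * ‖x s ω - x (s-1) ω‖^2)
          - (φ (z s ω) + μ * ‖z s ω - x (s-1) ω‖^2))) P :=
      (hintA s hs).add (hintgap s hs)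
    have hmain := integral_mono (hintφ s) hint12 hpt
    rw [integral_add (hintA s hs) (hintgap s hs)] at hmain
    rw [hEP1]
    simp only [hEAdef, hEGdef]
    exact hmain
  set B : ℕ → ℝ := fun s => if s ≤ S+1 then 3 * EA s + 8 * EP s - 11 * L else 0 with hBdef
  have hBub : ∀ s, 1 ≤ s → B s ≤ 22*Δφ := by
    intro s h1
    simp only [hBdef]
    split
    · rename_i h2
      have hs : s ∈ Finset.Icc 1 (S+1) := Finset.mem_Icc.mpr ⟨h1, h2⟩
      have := hEAub s hs
      have := hEPub s
      have := hEAlb s hs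
      have := hEPlb s
      have h4 : 0 ≤ μ * ED s := mul_nonneg hμ.le (hED0 s)
      linarith
    · linarith
  have hBlb : ∀ s, 1 ≤ s → 0 ≤ B s := by
    intro s h1
    simp only [hBdef]
    split
    · rename_i h2
      have hs : s ∈ Finset.Icc 1 (S+1) := Finset.mem_Icc.mpr ⟨h1, h2⟩
      have := hEAlb s hs
      have := hEPlb s
      have h4 : 0 ≤ μ * ED s := mul_nonneg hμ.le (hED0 s)
      linarith
    · linarith
  have hBrec : ∀ s, 1 ≤ s → s ≤ S+1 → 7*μ/3 * ED s ≤ B s - B (s+1) + 16 * ε₃ s := by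
    intro s h1 h2
    have hs : s ∈ Finset.Icc 1 (S+1) := Finset.mem_Icc.mpr ⟨h1, h2⟩
    have hBs : B s = 3 * EA s + 8 * EP s - 11 * L := by
      simp only [hBdef]; rw [if_pos h2]
    have hε₃0 := (hε₃ s hs).1
    by_cases hcase : s ≤ S
    · have hBs1 : B (s+1) = 3 * EA (s+1) + 8 * EP (s+1) - 11 * L := by
        simp only [hBdef]; rw [if_pos (by omega)]
      rw [hBs, hBs1]
      have k1 := hrecA s h1 hcase
      have k2 := hrecP s h1 hcase
      have k3 := hF3 s hs
      have k4 : ε₁ s * ED s ≤ μ/24 * ED s :=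
        mul_le_mul_of_nonneg_right (hε₁ s hs).2 (hED0 s)
      have k5 : ε₂ s * (EP s - EA s) ≤ 1/2 * (EP s - EA s) :=
        mul_le_mul_of_nonneg_right (hε₂ s hs).2 (by linarith [hEPA s hs])
      linarith
    · have hs1 : ¬ (s+1 ≤ S+1) := by omega
      have hBs1 : B (s+1) = 0 := by simp only [hBdef]; rw [if_neg hs1]
      rw [hBs, hBs1]
      have := hEAlb s hs
      have := hEPlb s
      have h4 : 0 ≤ μ * ED s := mul_nonneg hμ.le (hED0 s)
      linarith
  have habel : ∀ n, 1 ≤ n → n ≤ S+1 →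
      ∑ s ∈ Finset.Icc 1 n, (s:ℝ)^α * (7*μ/3 * ED s)
        ≤ 22*Δφ * (n:ℝ)^α - (n:ℝ)^α * B (n+1)
          + ∑ s ∈ Finset.Icc 1 n, (s:ℝ)^α * (16 * ε₃ s) := by
    intro n h1
    induction n, h1 using Nat.le_induction with
    | base =>
      intro _
      simp only [Finset.Icc_self, Finset.sum_singleton, Nat.cast_one, Real.one_rpow, one_mul]
      have hb := hBrec 1 le_rfl (by omega)
      have hub := hBub 1 le_rfl
      linarith
    | succ n hn ih =>
      intro h2
      have ihh := ih (by omega)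
      rw [Finset.sum_Icc_succ_top (by omega : 1 ≤ n+1),
          Finset.sum_Icc_succ_top (by omega : 1 ≤ n+1)]
      have hw1 : ((n:ℕ):ℝ)^α ≤ ((n+1:ℕ):ℝ)^α :=
        Real.rpow_le_rpow (by positivity) (by push_cast; linarith) hα.le
      have hwn : (0:ℝ) ≤ ((n+1:ℕ):ℝ)^α := Real.rpow_nonneg (by positivity) _
      have hr := hBrec (n+1) (by omega) h2
      have hBb := hBub (n+1) (by omega)
      have hBl := hBlb (n+1) (by omega)
      have hterm : ((n+1:ℕ):ℝ)^α * (7*μ/3 * ED (n+1))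
          ≤ ((n+1:ℕ):ℝ)^α * (B (n+1) - B (n+2) + 16 * ε₃ (n+1)) :=
        mul_le_mul_of_nonneg_left hr hwn
      have hcoef : (((n+1:ℕ):ℝ)^α - ((n:ℕ):ℝ)^α) * B (n+1)
          ≤ (((n+1:ℕ):ℝ)^α - ((n:ℕ):ℝ)^α) * (22*Δφ) :=
        mul_le_mul_of_nonneg_left hBb (by linarith)
      nlinarith [ihh, hterm, hcoef]
  -- final assembly
  set m : ℝ := if α < 1 then α else 1 with hmdef
  have hm0 : 0 < m := by rw [hmdef]; split; exacts [hα, one_pos]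
  have hN0 : (0:ℝ) < ((S+1:ℕ):ℝ) := by positivity
  set Pα : ℝ := ((S+1:ℕ):ℝ)^α with hPαdef
  have hPα0 : 0 ≤ Pα := Real.rpow_nonneg hN0.le _
  have hBtop : B (S+1+1) = 0 := by simp only [hBdef]; rw [if_neg (by omega)]
  have habel' := habel (S+1) (by omega) le_rfl
  rw [hBtop] at habel'
  have hsum2 : ∑ s ∈ Finset.Icc 1 (S+1), (s:ℝ)^α * (16 * ε₃ s)
      ≤ 16 * c₃ * ∑ s ∈ Finset.Icc 1 (S+1), (s:ℝ)^(α-1) := by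
    rw [Finset.mul_sum]
    apply Finset.sum_le_sum
    intro s hs
    obtain ⟨h1, h2⟩ := Finset.mem_Icc.mp hs
    have hs0 : (0:ℝ) < (s:ℝ) := by exact_mod_cast Nat.pos_of_ne_zero (by omega)
    have he := hε₃ s hs
    have hwnn : (0:ℝ) ≤ (s:ℝ)^α := Real.rpow_nonneg hs0.le _
    have h3 : (s:ℝ)^α * (16 * ε₃ s) ≤ (s:ℝ)^α * (16 * (c₃/(s:ℝ))) :=
      mul_le_mul_of_nonneg_left (by linarith [he.2]) hwnn
    have h4 : (s:ℝ)^(α-1) = (s:ℝ)^α / (s:ℝ) := by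
      rw [Real.rpow_sub hs0, Real.rpow_one]
    rw [h4]
    calc (s:ℝ)^α * (16 * ε₃ s) ≤ (s:ℝ)^α * (16 * (c₃/(s:ℝ))) := h3
      _ = 16 * c₃ * ((s:ℝ)^α/(s:ℝ)) := by ring
  have hsum3 : ∑ s ∈ Finset.Icc 1 (S+1), (s:ℝ)^(α-1) ≤ 2*Pα/m := by
    by_cases hcase : α < 1
    · have hmain := sum_rpow_le α hα hcase (S+1) (by omega)
      rw [← hPαdef] at hmain
      have hmeq : m = α := by rw [hmdef, if_pos hcase]
      have hNα1 : 1 ≤ Pα := by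
        rw [hPαdef]
        calc (1:ℝ) = 1^α := (Real.one_rpow α).symm
          _ ≤ ((S+1:ℕ):ℝ)^α := Real.rpow_le_rpow zero_le_one (by push_cast; linarith) hα.le
      rw [hmeq]
      have e2 : 1 + (Pα - 1)/α ≤ 2*Pα/α := by
        rw [show (1:ℝ) + (Pα-1)/α = (α + (Pα-1))/α by field_simp]
        exact (div_le_div_iff_of_pos_right hα).mpr (by linarith)
      linarith
    · have hmeq : m = 1 := by rw [hmdef, if_neg hcase]
      push_neg at hcase
      rw [hmeq]
      have hterm : ∀ s ∈ Finset.Icc 1 (S+1), (s:ℝ)^(α-1) ≤ ((S+1:ℕ):ℝ)^(α-1) := by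
        intro s hs
        obtain ⟨h1, h2⟩ := Finset.mem_Icc.mp hs
        exact Real.rpow_le_rpow (by positivity) (by exact_mod_cast h2) (by linarith)
      have hcard : (Finset.Icc 1 (S+1)).card = S+1 := by
        rw [Nat.card_Icc]; omega
      have hsum := Finset.sum_le_card_nsmul _ _ _ hterm
      rw [hcard, nsmul_eq_mul] at hsum
      have hsplit : ((S+1:ℕ):ℝ)^α = ((S+1:ℕ):ℝ)^(1+(α-1)) := by norm_num
      rw [Real.rpow_add hN0, Real.rpow_one] at hsplit
      have hmul : ((S+1:ℕ):ℝ) * ((S+1:ℕ):ℝ)^(α-1) = Pα := by rw [hPαdef, hsplit]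
      rw [hmul] at hsum
      rw [div_one]
      linarith
  rw [← hPαdef] at habel'
  have hkey : ∑ s ∈ Finset.Icc 1 (S+1), (s:ℝ)^α * (7*μ/3 * ED s)
      ≤ 22*Δφ*Pα + 16*c₃*(2*Pα/m) := by
    have h1 : 16 * c₃ * (∑ s ∈ Finset.Icc 1 (S+1), (s:ℝ)^(α-1)) ≤ 16*c₃*(2*Pα/m) :=
      mul_le_mul_of_nonneg_left hsum3 (by linarith)
    have h2 : 22 * Δφ * Pα - Pα * 0 + ∑ s ∈ Finset.Icc 1 (S+1), (s:ℝ)^α * (16 * ε₃ s)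
        ≤ 22*Δφ*Pα + 16*c₃*(2*Pα/m) := by
      have := hsum2.trans h1
      linarith
    exact habel'.trans h2
  have hinv : γ⁻¹ = 2*μ := by rw [hγ, one_div, inv_inv]
  have hgoalint : ∀ s : ℕ, (∫ ω, ‖γ⁻¹ • (x (s-1) ω - z s ω)‖^2 ∂P) = 4*μ^2 * ED s := by
    intro s
    have he : (fun ω => ‖γ⁻¹ • (x (s-1) ω - z s ω)‖^2)
        = fun ω => 4*μ^2 * ‖x (s-1) ω - z s ω‖^2 := by
      funext ω
      rw [norm_smul, hinv, Real.norm_eq_abs, abs_of_pos (by positivity : (0:ℝ) < 2*μ), mul_pow]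
      try ring
    calc ∫ ω, ‖γ⁻¹ • (x (s-1) ω - z s ω)‖^2 ∂P
        = ∫ ω, 4*μ^2 * ‖x (s-1) ω - z s ω‖^2 ∂P := by rw [he]
      _ = 4*μ^2 * ∫ ω, ‖x (s-1) ω - z s ω‖^2 ∂P := integral_const_mul _ _
      _ = 4*μ^2 * ED s := by simp only [hEDdef]
  simp only [hgoalint]
  have hW := sum_rpow_ge α hα (S+1) (by omega)
  have hWpos : 0 < ∑ s ∈ Finset.Icc 1 (S+1), (s:ℝ)^α := by
    calc (0:ℝ) < ((S+1:ℕ):ℝ)^(α+1)/(α+1) := by positivity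
      _ ≤ _ := hW
  have hnum : ∑ s ∈ Finset.Icc 1 (S+1), (s:ℝ)^α * (4*μ^2 * ED s)
      = 12*μ/7 * ∑ s ∈ Finset.Icc 1 (S+1), (s:ℝ)^α * (7*μ/3 * ED s) := by
    rw [Finset.mul_sum]; exact Finset.sum_congr rfl fun s _ => by ring
  rw [div_le_iff₀ hWpos, hnum]
  have hS1 : ((S+1:ℕ):ℝ) = (S:ℝ)+1 := by push_cast; ring
  have hR0 : 0 ≤ 32*Δφ*(α+1)/(γ*((S:ℝ)+1)) + 48*c₃*(α+1)/(γ*((S:ℝ)+1)*m) := by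
    have d1 : (0:ℝ) ≤ γ*((S:ℝ)+1) := by positivity
    exact add_nonneg
      (div_nonneg (mul_nonneg (by linarith) (by linarith)) d1)
      (div_nonneg (mul_nonneg (by linarith) (by linarith)) (mul_nonneg d1 hm0.le))
  have hWlow : Pα*((S:ℝ)+1)/(α+1) ≤ ∑ s ∈ Finset.Icc 1 (S+1), (s:ℝ)^α := by
    have e1 : ((S+1:ℕ):ℝ)^(α+1) = Pα * ((S:ℝ)+1) := by
      rw [hPαdef, Real.rpow_add hN0, Real.rpow_one, hS1]
    calc Pα*((S:ℝ)+1)/(α+1) = ((S+1:ℕ):ℝ)^(α+1)/(α+1) := by rw [e1]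
      _ ≤ _ := hW
  have heq : (32*Δφ*(α+1)/(γ*((S:ℝ)+1)) + 48*c₃*(α+1)/(γ*((S:ℝ)+1)*m)) * (Pα*((S:ℝ)+1)/(α+1))
      = 64*μ*Δφ*Pα + 96*μ*c₃*Pα/m := by
    rw [hγ]
    have hne1 : (S:ℝ)+1 ≠ 0 := by positivity
    have hne2 : α+1 ≠ 0 := by positivity
    field_simp
    ring
  calc 12*μ/7 * ∑ s ∈ Finset.Icc 1 (S+1), (s:ℝ)^α * (7*μ/3 * ED s)
      ≤ 12*μ/7 * (22*Δφ*Pα + 16*c₃*(2*Pα/m)) :=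
        mul_le_mul_of_nonneg_left hkey (by positivity)
    _ ≤ 64*μ*Δφ*Pα + 96*μ*c₃*Pα/m := by
        have p1 : 0 ≤ μ*Δφ*Pα := mul_nonneg (mul_nonneg hμ.le hΔ0) hPα0
        have p2 : 0 ≤ μ*c₃*(Pα/m) := mul_nonneg (mul_nonneg hμ.le hc₃) (div_nonneg hPα0 hm0.le)
        have e : 12*μ/7 * (22*Δφ*Pα + 16*c₃*(2*Pα/m))
            = 264/7*(μ*Δφ*Pα) + 384/7*(μ*c₃*(Pα/m)) := by ring
        have e2 : 64*μ*Δφ*Pα + 96*μ*c₃*Pα/m = 64*(μ*Δφ*Pα) + 96*(μ*c₃*(Pα/m)) := by ring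
        rw [e, e2]
        linarith
    _ = (32*Δφ*(α+1)/(γ*((S:ℝ)+1)) + 48*c₃*(α+1)/(γ*((S:ℝ)+1)*m)) * (Pα*((S:ℝ)+1)/(α+1)) := heq.symm
    _ ≤ (32*Δφ*(α+1)/(γ*((S:ℝ)+1)) + 48*c₃*(α+1)/(γ*((S:ℝ)+1)*m))
          * (∑ s ∈ Finset.Icc 1 (S+1), (s:ℝ)^α) :=
        mul_le_mul_of_nonneg_left hWlow hR0
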